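/- Let s ≥ 2 and let M be an s×s matrix over 𝔽₂ containing exactly c ones, where s ≤ c ≤ s². Then, as an inequality of real numbers, N₂(M) ≤ C(s,2)·( c²/s² − c²(c−s)²/(s⁴(s−1)²) ), where C(s,2) = s(s−1)/2. -/
import Mathlib

open scoped Classical

noncomputable section

/-- The 2×2 submatrix of `M` on rows `i, j` and columns `k, l`. -/
def sub2 {s : ℕ} (M : Matrix (Fin s) (Fin s) (ZMod 2)) (i j k l : Fin s) :
    Matrix (Fin 2) (Fin 2) (ZMod 2) := !![M i k, M i l; M j k, M j l]

/-- `N2 M` is the number of invertible 2×2 submatrices of `M`, i.e. the number of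
quadruples `(i, j, k, l)` with `i < j`, `k < l` such that the 2×2 submatrix of `M`
on rows `i, j` and columns `k, l` is invertible over `𝔽₂`. -/
def N2 {s : ℕ} (M : Matrix (Fin s) (Fin s) (ZMod 2)) : ℕ :=
  (Finset.univ.filter (fun q : Fin s × Fin s × Fin s × Fin s =>
    q.1 < q.2.1 ∧ q.2.2.1 < q.2.2.2 ∧ IsUnit (sub2 M q.1 q.2.1 q.2.2.1 q.2.2.2))).card

namespace N2Proof

variable {s : ℕ}

/-- Real indicator of a `1` entry. -/
def A (M : Matrix (Fin s) (Fin s) (ZMod 2)) (i k : Fin s) : ℝ :=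
  if M i k = 1 then 1 else 0

lemma A_sq (M : Matrix (Fin s) (Fin s) (ZMod 2)) (i k : Fin s) :
    A M i k * A M i k = A M i k := by unfold A; split <;> norm_num

/-- Polynomial indicator of invertibility of the 2×2 submatrix. -/
def F (M : Matrix (Fin s) (Fin s) (ZMod 2)) (i j k l : Fin s) : ℝ :=
  A M i k * A M j l + A M j k * A M i l - 2 * (A M i k * A M i l * (A M j k * A M j l))

/-- Row-pair column correlation. -/
def f (M : Matrix (Fin s) (Fin s) (ZMod 2)) (i j : Fin s) : ℝ :=
  ∑ k, A M i k * A M j k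

/-- Off-diagonal indicator. -/
def δ (i j : Fin s) : ℝ := if i = j then 0 else 1

lemma ind_eq (M : Matrix (Fin s) (Fin s) (ZMod 2)) (i j k l : Fin s) :
    (if IsUnit (sub2 M i j k l) then (1:ℝ) else 0) = F M i j k l := by
  have h2 : ∀ x : ZMod 2, x = 0 ∨ x = 1 := by decide
  have hdet : IsUnit (sub2 M i j k l) ↔ M i k * M j l - M i l * M j k = 1 := by
    rw [Matrix.isUnit_iff_isUnit_det, sub2, Matrix.det_fin_two_of]
    constructor
    · intro h
      rcases h2 (M i k * M j l - M i l * M j k) with h' | h'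
      · rw [h'] at h; exact absurd h not_isUnit_zero
      · exact h'
    · intro h; rw [h]; exact isUnit_one
  simp only [hdet]
  unfold F A
  rcases h2 (M i k) with ha | ha <;> rcases h2 (M i l) with hb | hb <;>
    rcases h2 (M j k) with hc | hc <;> rcases h2 (M j l) with hd | hd <;>
    simp [ha, hb, hc, hd] <;> norm_num <;> decide

lemma sum_pair (g : Fin s → Fin s → ℝ) (hsym : ∀ i j, g i j = g j i)
    (hdiag : ∀ i, g i i = 0) :
    ∑ i, ∑ j, g i j = 2 * ∑ i, ∑ j, (if i < j then g i j else 0) := by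
  have key : ∀ i j : Fin s, g i j =
      (if i < j then g i j else 0) + (if j < i then g i j else 0) := by
    intro i j
    rcases lt_trichotomy i j with h | h | h
    · rw [if_pos h, if_neg (asymm h), add_zero]
    · subst h; simp [hdiag]
    · rw [if_neg (asymm h), if_pos h, zero_add]
  calc ∑ i, ∑ j, g i j
      = ∑ i, ∑ j, ((if i < j then g i j else 0) + (if j < i then g i j else 0)) := by
        simp_rw [← key]
    _ = (∑ i, ∑ j, (if i < j then g i j else 0))
        + ∑ i, ∑ j, (if j < i then g i j else 0) := by
        simp_rw [Finset.sum_add_distrib]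
    _ = 2 * ∑ i, ∑ j, (if i < j then g i j else 0) := by
        rw [two_mul]; congr 1
        rw [Finset.sum_comm]
        refine Finset.sum_congr rfl fun i _ => Finset.sum_congr rfl fun j _ => ?_
        rw [hsym]

lemma sum4_1 (a : Fin s → Fin s → ℝ) :
    ∑ i, ∑ j, ∑ k, ∑ l, a i k * a j l = (∑ i, ∑ k, a i k) ^ 2 := by
  have h : ∀ i j : Fin s, ∑ k, ∑ l, a i k * a j l = (∑ k, a i k) * (∑ l, a j l) :=
    fun i j => (Finset.sum_mul_sum _ _ _ _).symm
  simp_rw [h]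
  rw [← Finset.sum_mul_sum, sq]

lemma sum4_2 (a : Fin s → Fin s → ℝ) :
    ∑ i, ∑ j, ∑ k, ∑ l, a j k * a i l = (∑ i, ∑ k, a i k) ^ 2 := by
  have h : ∀ i j : Fin s, ∑ k, ∑ l, a j k * a i l = (∑ k, a j k) * (∑ l, a i l) :=
    fun i j => (Finset.sum_mul_sum _ _ _ _).symm
  simp_rw [h]
  have h2 : ∀ i : Fin s, ∑ j, (∑ k, a j k) * (∑ l, a i l)
      = (∑ j, ∑ k, a j k) * (∑ l, a i l) := fun i => (Finset.sum_mul _ _ _).symm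
  simp_rw [h2]
  rw [← Finset.mul_sum, sq]

lemma sum4_3 (a : Fin s → Fin s → ℝ) :
    ∑ i, ∑ j, ∑ k, ∑ l, a i k * a i l * (a j k * a j l)
      = ∑ i, ∑ j, (∑ k, a i k * a j k) ^ 2 := by
  refine Finset.sum_congr rfl fun i _ => Finset.sum_congr rfl fun j _ => ?_
  have h : ∀ k l : Fin s, a i k * a i l * (a j k * a j l)
      = (a i k * a j k) * (a i l * a j l) := by intros; ring
  simp_rw [h]
  rw [← Finset.sum_mul_sum, sq]

lemma sum3 (a : Fin s → Fin s → ℝ) :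
    ∑ i, ∑ j, ∑ k, a i k * a j k = ∑ k, (∑ i, a i k) ^ 2 := by
  have h1 : ∀ i : Fin s, ∑ j, ∑ k, a i k * a j k = ∑ k, ∑ j, a i k * a j k :=
    fun i => Finset.sum_comm
  simp_rw [h1]
  rw [Finset.sum_comm]
  refine Finset.sum_congr rfl fun k _ => ?_
  have h2 : ∀ i : Fin s, ∑ j, a i k * a j k = a i k * ∑ j, a j k :=
    fun i => (Finset.mul_sum _ _ _).symm
  simp_rw [h2, ← Finset.sum_mul, sq]

lemma delta_sum : ∑ i : Fin s, ∑ j : Fin s, δ i j = (s:ℝ)^2 - s := by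
  have h : ∀ i : Fin s, ∑ j : Fin s, δ i j = (s:ℝ) - 1 := by
    intro i
    have hp : ∀ j : Fin s, δ i j = 1 - (if i = j then (1:ℝ) else 0) := by
      intro j; unfold δ; split <;> ring
    simp_rw [hp, Finset.sum_sub_distrib, Finset.sum_const, Finset.card_univ,
      Fintype.card_fin, Finset.sum_ite_eq, Finset.mem_univ, if_true]
    simp
  simp_rw [h, Finset.sum_const, Finset.card_univ, Fintype.card_fin]
  push_cast
  ring

lemma diag_extract (g : Fin s → Fin s → ℝ) :
    ∑ i, ∑ j, (if i = j then g i j else 0) = ∑ i, g i i := by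
  refine Finset.sum_congr rfl fun i _ => ?_
  rw [Finset.sum_ite_eq, if_pos (Finset.mem_univ i)]

end N2Proof

set_option maxHeartbeats 1000000 in
open N2Proof in
theorem N2_upper_bound (s : ℕ) (hs : 2 ≤ s) (M : Matrix (Fin s) (Fin s) (ZMod 2)) (c : ℕ)
    (hc : c = (Finset.univ.filter (fun q : Fin s × Fin s => M q.1 q.2 = 1)).card)
    (hcl : s ≤ c) (hcu : c ≤ s ^ 2) :
    (N2 M : ℝ) ≤ (s.choose 2 : ℝ) *
      ((c : ℝ) ^ 2 / (s : ℝ) ^ 2 -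
        (c : ℝ) ^ 2 * ((c : ℝ) - (s : ℝ)) ^ 2 / ((s : ℝ) ^ 4 * ((s : ℝ) - 1) ^ 2)) := by
  classical
  set S : ℝ := (s : ℝ) with hS
  set C : ℝ := (c : ℝ) with hC
  have hS2 : (2:ℝ) ≤ S := by rw [hS]; exact_mod_cast hs
  have hCS' : S ≤ C := by rw [hS, hC]; exact_mod_cast hcl
  have hCu : C ≤ S ^ 2 := by rw [hS, hC]; exact_mod_cast hcu
  -- c as a sum of indicators
  have hCsum : C = ∑ i : Fin s, ∑ k : Fin s, A M i k := by
    rw [hC, hc, Finset.card_filter]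
    push_cast
    rw [Fintype.sum_prod_type]
    rfl
  -- N2 as a nested sum
  have hN : (N2 M : ℝ) = ∑ i : Fin s, ∑ j : Fin s,
      if i < j then (∑ k : Fin s, ∑ l : Fin s,
        if k < l then F M i j k l else 0) else 0 := by
    rw [N2, Finset.card_filter]
    push_cast
    rw [Fintype.sum_prod_type]
    refine Finset.sum_congr rfl fun i _ => ?_
    rw [Fintype.sum_prod_type]
    refine Finset.sum_congr rfl fun j _ => ?_
    rw [Fintype.sum_prod_type]
    by_cases hij : i < j
    · simp only [hij, true_and, if_true]
      refine Finset.sum_congr rfl fun k _ => Finset.sum_congr rfl fun l _ => ?_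
      by_cases hkl : k < l
      · simp only [hkl, true_and, if_true]; exact ind_eq M i j k l
      · simp [hkl]
    · simp [hij]
  -- symmetry and vanishing facts for F
  have hprod : ∀ x y : ℝ, x * x = x → y * y = y → x * y * (x * y) = x * y := by
    intro x y hx hy
    calc x * y * (x * y) = (x * x) * (y * y) := by ring
      _ = x * y := by rw [hx, hy]
  have hFr : ∀ i j k l : Fin s, F M i j k l = F M j i k l := by
    intro i j k l; unfold F; ring
  have hFc : ∀ i j k l : Fin s, F M i j k l = F M i j l k := by
    intro i j k l; unfold F; ring
  have hFdr : ∀ i k l : Fin s, F M i i k l = 0 := by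
    intro i k l; unfold F
    rw [hprod _ _ (A_sq M i k) (A_sq M i l)]; ring
  have hFdc : ∀ i j k : Fin s, F M i j k k = 0 := by
    intro i j k; unfold F
    have h1 := A_sq M i k
    have h2 := A_sq M j k
    nlinarith [h1, h2]
  -- fold the two strict orders into full sums
  have hG2 : ∀ i j : Fin s, ∑ k, ∑ l, F M i j k l
      = 2 * ∑ k, ∑ l, (if k < l then F M i j k l else 0) :=
    fun i j => sum_pair (fun k l => F M i j k l) (fun k l => hFc i j k l)
      (fun k => hFdc i j k)
  have hT : ∑ i, ∑ j, ∑ k, ∑ l, F M i j k l = 4 * (N2 M : ℝ) := by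
    have hGsym : ∀ i j : Fin s,
        (∑ k, ∑ l, (if k < l then F M i j k l else 0))
          = ∑ k, ∑ l, (if k < l then F M j i k l else 0) := by
      intro i j
      exact Finset.sum_congr rfl fun k _ => Finset.sum_congr rfl fun l _ => by
        rw [hFr]
    have hGdiag : ∀ i : Fin s,
        (∑ k, ∑ l, (if k < l then F M i i k l else 0)) = 0 := by
      intro i; simp [hFdr]
    calc ∑ i, ∑ j, ∑ k, ∑ l, F M i j k l
        = ∑ i, ∑ j, (2 * ∑ k, ∑ l, (if k < l then F M i j k l else 0)) := by
          exact Finset.sum_congr rfl fun i _ => Finset.sum_congr rfl fun j _ => hG2 i j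
      _ = 2 * ∑ i, ∑ j, ∑ k, ∑ l, (if k < l then F M i j k l else 0) := by
          simp_rw [Finset.mul_sum]
      _ = 2 * (2 * ∑ i, ∑ j, (if i < j then
            (∑ k, ∑ l, (if k < l then F M i j k l else 0)) else 0)) := by
          congr 1
          exact sum_pair _ (fun i j => hGsym i j) hGdiag
      _ = 4 * (N2 M : ℝ) := by rw [← hN]; ring
  -- expand F
  have hsplit : ∑ i, ∑ j, ∑ k, ∑ l, F M i j k l
      = C ^ 2 + C ^ 2 - 2 * ∑ i, ∑ j, (f M i j) ^ 2 := by
    have : ∑ i, ∑ j, ∑ k, ∑ l, F M i j k l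
        = (∑ i, ∑ j, ∑ k, ∑ l, A M i k * A M j l)
          + (∑ i, ∑ j, ∑ k, ∑ l, A M j k * A M i l)
          - 2 * ∑ i, ∑ j, ∑ k, ∑ l, A M i k * A M i l * (A M j k * A M j l) := by
      simp only [F, Finset.sum_add_distrib, Finset.sum_sub_distrib, ← Finset.mul_sum]
    rw [this, sum4_1, sum4_2, sum4_3, ← hCsum]
    rfl
  -- D and its diagonal
  have hND : 4 * (N2 M : ℝ) = 2 * C ^ 2 - 2 * ∑ i, ∑ j, (f M i j) ^ 2 := by
    rw [← hT, hsplit]; ring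
  have hfdiag : ∀ i : Fin s, f M i i = ∑ k, A M i k := by
    intro i; unfold f
    exact Finset.sum_congr rfl fun k _ => A_sq M i k
  -- Cauchy–Schwarz (diagonal): C² ≤ S * σ
  have hrsum : ∑ i : Fin s, (∑ k, A M i k) = C := hCsum.symm
  have hσ : C ^ 2 ≤ S * ∑ i : Fin s, (∑ k, A M i k) ^ 2 := by
    have := sq_sum_le_card_mul_sum_sq (s := (Finset.univ : Finset (Fin s)))
      (f := fun i => ∑ k, A M i k)
    rw [hrsum, Finset.card_univ, Fintype.card_fin] at this
    exact_mod_cast this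
  -- column sums: Tf = ∑_k (col k)² ≥ C²/S
  have hTf : ∑ i, ∑ j, f M i j = ∑ k : Fin s, (∑ i, A M i k) ^ 2 := sum3 (A M)
  have hcolsum : ∑ k : Fin s, (∑ i, A M i k) = C := by
    rw [hCsum]; exact Finset.sum_comm
  have hτ : C ^ 2 ≤ S * ∑ i, ∑ j, f M i j := by
    rw [hTf]
    have := sq_sum_le_card_mul_sum_sq (s := (Finset.univ : Finset (Fin s)))
      (f := fun k => ∑ i, A M i k)
    rw [hcolsum, Finset.card_univ, Fintype.card_fin] at this
    exact_mod_cast this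
  -- off-diagonal Cauchy–Schwarz
  have hδsq : ∀ i j : Fin s, δ i j * δ i j = δ i j := by
    intro i j; unfold δ; split <;> ring
  have hCS2 := Finset.sum_mul_sq_le_sq_mul_sq (Finset.univ : Finset (Fin s × Fin s))
    (fun p => f M p.1 p.2 * δ p.1 p.2) (fun p => δ p.1 p.2)
  have e1 : ∑ p : Fin s × Fin s, (f M p.1 p.2 * δ p.1 p.2) * δ p.1 p.2
      = ∑ i, ∑ j, f M i j * δ i j := by
    rw [Fintype.sum_prod_type]
    exact Finset.sum_congr rfl fun i _ => Finset.sum_congr rfl fun j _ => by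
      rw [mul_assoc, hδsq]
  have e2 : ∑ p : Fin s × Fin s, (f M p.1 p.2 * δ p.1 p.2) ^ 2
      = (∑ i, ∑ j, (f M i j) ^ 2) - ∑ i, (f M i i) ^ 2 := by
    rw [Fintype.sum_prod_type]
    have hp : ∀ i j : Fin s, (f M i j * δ i j) ^ 2
        = (f M i j) ^ 2 - (if i = j then (f M i j) ^ 2 else 0) := by
      intro i j; unfold δ; split <;> ring
    simp_rw [hp, Finset.sum_sub_distrib]
    rw [diag_extract (fun i j => (f M i j) ^ 2)]
  have e3 : ∑ p : Fin s × Fin s, (δ p.1 p.2) ^ 2 = S ^ 2 - S := by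
    rw [Fintype.sum_prod_type]
    have hp : ∀ i j : Fin s, (δ i j) ^ 2 = δ i j := by
      intro i j; rw [sq, hδsq]
    simp_rw [hp]
    exact delta_sum
  rw [e1, e2, e3] at hCS2
  -- value of the off-diagonal linear sum
  have hO : ∑ i, ∑ j, f M i j * δ i j = (∑ i, ∑ j, f M i j) - C := by
    have hp : ∀ i j : Fin s, f M i j * δ i j
        = f M i j - (if i = j then f M i j else 0) := by
      intro i j; unfold δ; split <;> ring
    simp_rw [hp, Finset.sum_sub_distrib]
    rw [diag_extract (fun i j => f M i j)]
    congr 1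
    rw [← hrsum]
    exact Finset.sum_congr rfl fun i _ => hfdiag i
  -- put everything into real variables
  set D : ℝ := ∑ i, ∑ j, (f M i j) ^ 2 with hD
  set σ : ℝ := ∑ i, (f M i i) ^ 2 with hσdef
  set Tf : ℝ := ∑ i, ∑ j, f M i j with hTfdef
  have hσval : σ = ∑ i : Fin s, (∑ k, A M i k) ^ 2 := by
    rw [hσdef]
    exact Finset.sum_congr rfl fun i _ => by rw [hfdiag]
  have hσ' : C ^ 2 ≤ S * σ := by rw [hσval]; exact hσ
  have hO' : (Tf - C) ^ 2 ≤ (D - σ) * (S ^ 2 - S) := by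
    rw [← hO]
    exact hCS2
  -- numeric endgame
  have hSpos : (0:ℝ) < S := by linarith
  have hS1pos : (0:ℝ) < S - 1 := by linarith
  have hdenpos : (0:ℝ) < S ^ 2 - S := by nlinarith
  have hTflb : C ^ 2 / S ≤ Tf := by
    rw [div_le_iff₀ hSpos, mul_comm]; exact hτ
  have hOnn : 0 ≤ C ^ 2 / S - C := by
    rw [le_sub_iff_add_le, zero_add, le_div_iff₀ hSpos]; nlinarith
  have hOsq : (C ^ 2 / S - C) ^ 2 ≤ (Tf - C) ^ 2 := by
    have h1 : C ^ 2 / S - C ≤ Tf - C := by linarith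
    nlinarith [hOnn, h1]
  have hDlb : C ^ 2 / S + (C ^ 2 / S - C) ^ 2 / (S ^ 2 - S) ≤ D := by
    have h1 : C ^ 2 / S ≤ σ := by rw [div_le_iff₀ hSpos, mul_comm]; exact hσ'
    have h2 : (C ^ 2 / S - C) ^ 2 / (S ^ 2 - S) ≤ D - σ := by
      rw [div_le_iff₀ hdenpos]
      calc (C ^ 2 / S - C) ^ 2 ≤ (Tf - C) ^ 2 := hOsq
        _ ≤ (D - σ) * (S ^ 2 - S) := hO'
    linarith
  have hNval : (N2 M : ℝ) = (2 * C ^ 2 - 2 * D) / 4 := by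
    rw [hD] at hND ⊢
    linarith [hND]
  rw [hNval, Nat.cast_choose_two]
  have hrhs : ((s:ℝ) * ((s:ℝ) - 1) / 2) *
      (C ^ 2 / S ^ 2 - C ^ 2 * (C - S) ^ 2 / (S ^ 4 * (S - 1) ^ 2))
      = (2 * C ^ 2 - 2 * (C ^ 2 / S + (C ^ 2 / S - C) ^ 2 / (S ^ 2 - S))) / 4 := by
    rw [← hS]
    have h0 : S ≠ 0 := ne_of_gt hSpos
    have h1 : S - 1 ≠ 0 := ne_of_gt hS1pos
    have h2 : S ^ 2 - S ≠ 0 := ne_of_gt hdenpos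
    field_simp
    ring
  rw [hrhs]
  have : 2 * (C ^ 2 / S + (C ^ 2 / S - C) ^ 2 / (S ^ 2 - S)) ≤ 2 * D := by linarith
  linarith
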